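/- For every positive integer k and every sign b ∈ {−1, 1}, the number of sequences of length k over {−1, 0, 1} whose nonzero terms alternate in sign, whose first nonzero term (if any) equals b, and which have an even (possibly zero) number of nonzero terms is 2^(k−1). -/

import Mathlib

open Finset

namespace Stmt1Aux

variable {k : ℕ}

/-- The canonical sequence attached to a set `S` of nonzero positions. -/
def vS (b : ℤ) (S : Finset (Fin k)) : Fin k → ℤ :=
  fun i => if i ∈ S then (if Even (S.filter (· < i)).card then b else -b) else 0

lemma vS_ne_zero {b : ℤ} (hb : b ≠ 0) (S : Finset (Fin k)) (i : Fin k) :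
    vS b S i ≠ 0 ↔ i ∈ S := by
  by_cases h : i ∈ S <;> simp only [vS, h, if_true, if_false] <;>
    [skip; simp]
  split_ifs <;> simp [hb]

lemma filter_lt_eq (S : Finset (Fin k)) (i j : Fin k) (hij : i < j) (hi : i ∈ S)
    (hbetween : ∀ l ∈ S, ¬(i < l ∧ l < j)) :
    S.filter (· < j) = insert i (S.filter (· < i)) := by
  ext x
  simp only [Finset.mem_filter, Finset.mem_insert]
  constructor
  · rintro ⟨hx, hxj⟩
    rcases lt_trichotomy x i with h | h | h
    · exact Or.inr ⟨hx, h⟩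
    · exact Or.inl h
    · exact absurd ⟨h, hxj⟩ (hbetween x hx)
  · rintro (rfl | ⟨hx, hxi⟩)
    · exact ⟨hi, hij⟩
    · exact ⟨hx, hxi.trans hij⟩

lemma vS_injective {b : ℤ} (hb : b ≠ 0) :
    Function.Injective (vS (k := k) b) := by
  intro S T h
  ext i
  rw [← vS_ne_zero hb S i, ← vS_ne_zero hb T i, h]

lemma vS_mem (b : ℤ) (hb : b = -1 ∨ b = 1) (S : Finset (Fin k)) (hS : Even S.card) :
    (∀ i, vS b S i = -1 ∨ vS b S i = 0 ∨ vS b S i = 1) ∧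
      (∀ i j : Fin k, i < j → vS b S i ≠ 0 → vS b S j ≠ 0 →
        (∀ l, i < l → l < j → vS b S l = 0) → vS b S j = -vS b S i) ∧
      (∀ i : Fin k, vS b S i ≠ 0 → (∀ l, l < i → vS b S l = 0) → vS b S i = b) ∧
      Even (Finset.univ.filter (fun i => vS b S i ≠ 0)).card := by
  have hb0 : b ≠ 0 := by rcases hb with h | h <;> simp [h]
  refine ⟨?_, ?_, ?_, ?_⟩
  · intro i
    unfold vS
    split_ifs <;> rcases hb with h | h <;> simp [h]
  · intro i j hij hi hj hgap
    rw [vS_ne_zero hb0] at hi hj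
    have hbetween : ∀ l ∈ S, ¬(i < l ∧ l < j) := by
      intro l hl ⟨h1, h2⟩
      exact (vS_ne_zero hb0 S l).mpr hl (hgap l h1 h2)
    have hfil := filter_lt_eq S i j hij hi hbetween
    have hnot : i ∉ S.filter (· < i) := by simp
    simp only [vS, hi, hj, if_true, hfil, Finset.card_insert_of_notMem hnot,
      Nat.even_add_one]
    by_cases h : Even (S.filter (· < i)).card <;> simp [h]
  · intro i hi hfirst
    rw [vS_ne_zero hb0] at hi
    have : S.filter (· < i) = ∅ := by
      rw [Finset.filter_eq_empty_iff]
      intro l hl hli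
      exact (vS_ne_zero hb0 S l).mpr hl (hfirst l hli)
    simp [vS, hi, this]
  · have : Finset.univ.filter (fun i => vS b S i ≠ 0) = S := by
      ext i; simp [vS_ne_zero hb0]
    rw [this]; exact hS

lemma eq_vS (b : ℤ) (hb : b = -1 ∨ b = 1) (v : Fin k → ℤ)
    (h2 : ∀ i j : Fin k, i < j → v i ≠ 0 → v j ≠ 0 →
        (∀ l, i < l → l < j → v l = 0) → v j = -v i)
    (h3 : ∀ i : Fin k, v i ≠ 0 → (∀ l, l < i → v l = 0) → v i = b) :
    v = vS b (Finset.univ.filter (fun i => v i ≠ 0)) := by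
  have hb0 : b ≠ 0 := by rcases hb with h | h <;> simp [h]
  set S := Finset.univ.filter (fun i => v i ≠ 0) with hSdef
  have mem : ∀ i, i ∈ S ↔ v i ≠ 0 := by intro i; simp [hSdef]
  have key : ∀ n : ℕ, ∀ i : Fin k, (i : ℕ) = n → v i = vS b S i := by
    intro n
    induction n using Nat.strong_induction_on with
    | _ n IH =>
      intro i hi
      by_cases hiS : i ∈ S
      · have hvi : v i ≠ 0 := (mem i).mp hiS
        by_cases hfirst : S.filter (· < i) = ∅
        · have hzero : ∀ l, l < i → v l = 0 := by
            intro l hl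
            by_contra hl0
            have : l ∈ S.filter (· < i) := by
              rw [Finset.mem_filter]; exact ⟨(mem l).mpr hl0, hl⟩
            simp [hfirst] at this
          rw [h3 i hvi hzero]
          simp [vS, hiS, hfirst]
        · obtain ⟨hne⟩ : Nonempty ((S.filter (· < i)).Nonempty) :=
            ⟨Finset.nonempty_of_ne_empty hfirst⟩
          set j := (S.filter (· < i)).max' hne with hjdef
          have hjmem : j ∈ S.filter (· < i) := Finset.max'_mem _ _
          rw [Finset.mem_filter] at hjmem
          obtain ⟨hjS, hji⟩ := hjmem
          have hgap : ∀ l, j < l → l < i → v l = 0 := by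
            intro l hjl hli
            by_contra hl0
            have hlmem : l ∈ S.filter (· < i) := by
              rw [Finset.mem_filter]; exact ⟨(mem l).mpr hl0, hli⟩
            exact absurd (Finset.le_max' _ l hlmem) (not_le.mpr hjl)
          have hvj : v j ≠ 0 := (mem j).mp hjS
          have hvij : v i = -v j := h2 j i hji hvj hvi hgap
          have hbetween : ∀ l ∈ S, ¬(j < l ∧ l < i) := by
            intro l hl ⟨ha, hb'⟩
            exact (mem l).mp hl (hgap l ha hb')
          have hfil := filter_lt_eq S j i hji hjS hbetween
          have IHj : v j = vS b S j := IH j.val (by omega) j rfl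
          have hnot : j ∉ S.filter (· < j) := by simp
          rw [hvij, IHj]
          simp only [vS, hiS, hjS, if_true, hfil,
            Finset.card_insert_of_notMem hnot, Nat.even_add_one]
          by_cases h : Even (S.filter (· < j)).card <;> simp [h]
      · have hvi : v i = 0 := by
          by_contra h
          exact hiS ((mem i).mpr h)
        simp [vS, hiS, hvi]
  funext i
  exact key i.val i rfl

/-- toggle a fixed element -/
def tog (i0 : Fin k) (S : Finset (Fin k)) : Finset (Fin k) :=
  if i0 ∈ S then S.erase i0 else insert i0 S

lemma tog_tog (i0 : Fin k) (S : Finset (Fin k)) : tog i0 (tog i0 S) = S := by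
  unfold tog
  by_cases h : i0 ∈ S
  · simp [h, Finset.insert_erase h]
  · simp [h, Finset.erase_insert h]

lemma tog_parity (i0 : Fin k) (S : Finset (Fin k)) :
    Even (tog i0 S).card ↔ ¬ Even S.card := by
  unfold tog
  by_cases h : i0 ∈ S
  · have hpos : 0 < S.card := Finset.card_pos.mpr ⟨i0, h⟩
    rw [if_pos h, Finset.card_erase_of_mem h]
    rw [Nat.even_sub (by omega)]
    simp [Nat.even_iff, Nat.odd_iff]
  · rw [if_neg h, Finset.card_insert_of_notMem h, Nat.even_add_one]

lemma count_even (hk : 0 < k) :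
    (Finset.univ.filter (fun S : Finset (Fin k) => Even S.card)).card = 2 ^ (k - 1) := by
  set E := Finset.univ.filter (fun S : Finset (Fin k) => Even S.card) with hE
  set O := Finset.univ.filter (fun S : Finset (Fin k) => ¬ Even S.card) with hO
  obtain ⟨i0⟩ : Nonempty (Fin k) := ⟨⟨0, hk⟩⟩
  have hEO : E.card = O.card := by
    apply Finset.card_nbij' (tog i0) (tog i0)
    · intro S hS
      simp only [hE, Finset.mem_coe, Finset.mem_filter, Finset.mem_univ, true_and] at hS
      simp only [hO, Finset.mem_coe, Finset.mem_filter, Finset.mem_univ, true_and]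
      simp [tog_parity i0 S, hS]
    · intro S hS
      simp only [hO, Finset.mem_coe, Finset.mem_filter, Finset.mem_univ, true_and] at hS
      simp only [hE, Finset.mem_coe, Finset.mem_filter, Finset.mem_univ, true_and]
      exact (tog_parity i0 S).mpr hS
    · intro S _; exact tog_tog i0 S
    · intro S _; exact tog_tog i0 S
  have htot : E.card + O.card = 2 ^ k := by
    rw [hE, hO, Finset.card_filter_add_card_filter_not]
    simp [Finset.card_univ, Fintype.card_finset]
  have h2 : 2 ^ k = 2 * 2 ^ (k - 1) := by
    conv_lhs => rw [show k = (k - 1) + 1 by omega]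
    ring
  omega

end Stmt1Aux

/-- For every positive integer `k` and sign `b ∈ {-1,1}`, the number of
sequences of length `k` over `{-1,0,1}` whose nonzero terms alternate in sign, whose
first nonzero term (if any) equals `b`, and which have an even (possibly zero) number
of nonzero terms is `2^(k-1)`. -/
theorem stmt1 (k : ℕ) (hk : 0 < k) (b : ℤ) (hb : b = -1 ∨ b = 1) :
    Set.ncard {v : Fin k → ℤ |
      (∀ i, v i = -1 ∨ v i = 0 ∨ v i = 1) ∧
      (∀ i j : Fin k, i < j → v i ≠ 0 → v j ≠ 0 →
        (∀ l, i < l → l < j → v l = 0) → v j = -v i) ∧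
      (∀ i : Fin k, v i ≠ 0 → (∀ l, l < i → v l = 0) → v i = b) ∧
      Even (Finset.univ.filter (fun i => v i ≠ 0)).card} = 2 ^ (k - 1) := by
  have hb0 : b ≠ 0 := by rcases hb with h | h <;> simp [h]
  have hset : {v : Fin k → ℤ |
      (∀ i, v i = -1 ∨ v i = 0 ∨ v i = 1) ∧
      (∀ i j : Fin k, i < j → v i ≠ 0 → v j ≠ 0 →
        (∀ l, i < l → l < j → v l = 0) → v j = -v i) ∧
      (∀ i : Fin k, v i ≠ 0 → (∀ l, l < i → v l = 0) → v i = b) ∧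
      Even (Finset.univ.filter (fun i => v i ≠ 0)).card} =
      (Stmt1Aux.vS b) '' {S : Finset (Fin k) | Even S.card} := by
    ext v
    constructor
    · rintro ⟨h1, h2, h3, h4⟩
      exact ⟨Finset.univ.filter (fun i => v i ≠ 0), h4,
        (Stmt1Aux.eq_vS b hb v h2 h3).symm⟩
    · rintro ⟨S, hS, rfl⟩
      exact Stmt1Aux.vS_mem b hb S hS
  rw [hset, Set.ncard_image_of_injective _ (Stmt1Aux.vS_injective hb0)]
  rw [← Stmt1Aux.count_even hk]
  rw [Set.ncard_eq_toFinset_card']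
  congr 1
  ext S
  simp
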